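/- Let G be a graph, S = {v₁, v₂, v₃} ⊆ V(G), and ℓ ≥ 2. Construct G' by adding, for each 1 ≤ i ≤ k−3 (k ≥ 4 fixed), a new vertex aⁱ and ℓ new vertices a₁ⁱ,…,a_ℓⁱ, with edges v₁aⱼⁱ and aⁱaⱼⁱ for all 1 ≤ j ≤ ℓ. Let S' = S ∪ {a¹,…,a^{k−3}}. Then G contains ℓ pairwise edge-disjoint Steiner trees connecting S if and only if G' contains ℓ pairwise edge-disjoint Steiner trees connecting S'. -/

import Mathlib

open SimpleGraph

def IsSteinerTree {V : Type*} (G : SimpleGraph V) (S : Set V) (T : G.Subgraph) : Prop :=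
  S ⊆ T.verts ∧ T.coe.IsTree

def EdgeDisjointFamily {V : Type*} (G : SimpleGraph V) (S : Set V) {ℓ : ℕ}
    (F : Fin ℓ → G.Subgraph) : Prop :=
  (∀ i, IsSteinerTree G S (F i)) ∧
    ∀ i j, i ≠ j → (F i).edgeSet ∩ (F j).edgeSet = ∅

/-- The graph `G'` obtained from `G` by adding, for each `i : Fin (k-3)`, a vertex
`aⁱ = inr (i, none)` and `ℓ` vertices `aⱼⁱ = inr (i, some j)`, with edges `v₁aⱼⁱ` and
`aⁱaⱼⁱ` for all `j`. -/
def fanExt {V : Type*} (G : SimpleGraph V) (v₁ : V) (k ℓ : ℕ) :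
    SimpleGraph (V ⊕ (Fin (k - 3) × Option (Fin ℓ))) :=
  SimpleGraph.fromRel (fun x y =>
    (∃ p q : V, x = Sum.inl p ∧ y = Sum.inl q ∧ G.Adj p q) ∨
    (∃ (i : Fin (k - 3)) (j : Fin ℓ), x = Sum.inl v₁ ∧ y = Sum.inr (i, some j)) ∨
    (∃ (i : Fin (k - 3)) (j : Fin ℓ), x = Sum.inr (i, none) ∧ y = Sum.inr (i, some j)))

namespace Stmt5Aux

open Sum Walk

/-! ### Generic walk lemmas -/

lemma cycle_two_nbrs {α : Type*} {G : SimpleGraph α} {u w : α} (c : G.Walk u u)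
    (hc : c.IsCycle) (hw : w ∈ c.support) :
    ∃ x y, x ≠ y ∧ s(w, x) ∈ c.edges ∧ s(w, y) ∈ c.edges := by
  classical
  have hc' := hc.rotate hw
  have hrot : (c.rotate w hw).edges ~r c.edges := c.rotate_edges w hw
  obtain ⟨x, hadj, q, hq⟩ := Walk.not_nil_iff.mp hc'.not_nil
  have h3 := hc'.three_le_length
  rw [hq] at h3 hc' hrot
  have hq2 : 2 ≤ q.length := by simp [Walk.length_cons] at h3; omega
  have hqrev : ¬ q.reverse.Nil := by
    rw [Walk.not_nil_iff_lt_length]; simp; omega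
  obtain ⟨y, hadj2, r, hr⟩ := Walk.not_nil_iff.mp hqrev
  have hyq : s(w, y) ∈ q.edges := by
    have : s(w, y) ∈ q.reverse.edges := by rw [hr]; simp
    simpa [Walk.edges_reverse] using this
  have hnodup := hc'.edges_nodup
  simp only [Walk.edges_cons, List.nodup_cons] at hnodup
  have hxy : x ≠ y := by rintro rfl; exact hnodup.1 hyq
  refine ⟨x, y, hxy, ?_, ?_⟩
  · exact hrot.mem_iff.mp (by simp)
  · exact hrot.mem_iff.mp (by simp [hyq])

lemma walk_descend {α β : Type*} {A : SimpleGraph α} {B : SimpleGraph β} (f : B →g A)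
    (hind : ∀ x y, A.Adj (f x) (f y) → B.Adj x y) :
    ∀ {a b : α} (p : A.Walk a b), (∀ v ∈ p.support, v ∈ Set.range f) →
      ∃ (a' b' : β) (ha : f a' = a) (hb : f b' = b) (q : B.Walk a' b'),
        (q.map f).copy ha hb = p := by
  intro a b p
  induction p with
  | @nil u =>
    intro hs
    obtain ⟨a', ha⟩ := hs u (by simp)
    subst ha
    exact ⟨a', a', rfl, rfl, Walk.nil, by simp⟩
  | @cons u v w h p ih =>
    intro hs
    obtain ⟨a', ha⟩ := hs u (by simp)
    obtain ⟨c', b', hc, hb, q, hq⟩ := ih (fun x hx => hs x (by simp [hx]))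
    subst hc; subst hb; subst ha
    simp only [Walk.copy_rfl_rfl] at hq
    have hadj : B.Adj a' c' := hind _ _ h
    exact ⟨a', b', rfl, rfl, Walk.cons hadj q, by simp [hq]⟩

lemma acyclic_descend {α β : Type*} {A : SimpleGraph α} {B : SimpleGraph β} (f : B →g A)
    (hinj : Function.Injective f) (hind : ∀ x y, A.Adj (f x) (f y) → B.Adj x y)
    (hB : B.IsAcyclic) {a : α} (c : A.Walk a a) (hc : c.IsCycle)
    (hsup : ∀ v ∈ c.support, v ∈ Set.range f) : False := by
  obtain ⟨a', b', ha, hb, q, hq⟩ := walk_descend f hind c hsup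
  have hab : a' = b' := hinj (hb.trans ha.symm) ▸ rfl
  subst hab
  subst ha
  simp only [Walk.copy_rfl_rfl] at hq
  have : (q.map f).IsCycle := hq ▸ hc
  exact hB q ((Walk.map_isCycle_iff_of_injective hinj).mp this)

/-! ### Adjacency in `fanExt` -/

variable {V : Type*} {G : SimpleGraph V} {v₁ : V} {k ℓ : ℕ}

lemma fanExt_adj_inl_inl {p q : V} :
    (fanExt G v₁ k ℓ).Adj (inl p) (inl q) ↔ G.Adj p q := by
  rw [fanExt, fromRel_adj]
  constructor
  · rintro ⟨hne, (⟨p', q', hp, hq, h⟩ | ⟨i, j, hp, hq⟩ | ⟨i, j, hp, hq⟩) |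
      (⟨p', q', hp, hq, h⟩ | ⟨i, j, hp, hq⟩ | ⟨i, j, hp, hq⟩)⟩ <;>
      first
        | (cases hp; cases hq; first | exact h | exact h.symm)
        | simp_all
  · intro h
    exact ⟨by simp [h.ne], Or.inl (Or.inl ⟨p, q, rfl, rfl, h⟩)⟩

lemma fanExt_adj_inl_inr {p : V} {z : Fin (k - 3) × Option (Fin ℓ)}
    (h : (fanExt G v₁ k ℓ).Adj (inl p) (inr z)) : p = v₁ := by
  rw [fanExt, fromRel_adj] at h
  rcases h with ⟨-, (⟨p', q', hp, hq, _⟩ | ⟨i, j, hp, hq⟩ | ⟨i, j, hp, hq⟩) |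
    (⟨p', q', hp, hq, _⟩ | ⟨i, j, hp, hq⟩ | ⟨i, j, hp, hq⟩)⟩ <;> simp_all

lemma fanExt_adj_v1_mid {i : Fin (k - 3)} {j : Fin ℓ} :
    (fanExt G v₁ k ℓ).Adj (inl v₁) (inr (i, some j)) := by
  rw [fanExt, fromRel_adj]
  exact ⟨by simp, Or.inl (Or.inr (Or.inl ⟨i, j, rfl, rfl⟩))⟩

lemma fanExt_adj_none_mid {i : Fin (k - 3)} {j : Fin ℓ} :
    (fanExt G v₁ k ℓ).Adj (inr (i, none)) (inr (i, some j)) := by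
  rw [fanExt, fromRel_adj]
  exact ⟨by simp, Or.inl (Or.inr (Or.inr ⟨i, j, rfl, rfl⟩))⟩

/-! ### The lifted subgraph (forward direction) -/

variable (G v₁) in
/-- One-sided adjacency relation of the lift of `T` using the middle vertices `(·, some t)`. -/
def liftRel (T : G.Subgraph) (k : ℕ) {ℓ : ℕ} (t : Fin ℓ)
    (x y : V ⊕ (Fin (k - 3) × Option (Fin ℓ))) : Prop :=
  (∃ p q, x = inl p ∧ y = inl q ∧ T.Adj p q) ∨
  (∃ i', x = inl v₁ ∧ y = inr (i', some t)) ∨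
  (∃ i', x = inr (i', none) ∧ y = inr (i', some t))

variable (G v₁) in
def lift (T : G.Subgraph) (k : ℕ) {ℓ : ℕ} (t : Fin ℓ) (hv : v₁ ∈ T.verts) :
    (fanExt G v₁ k ℓ).Subgraph where
  verts := (inl '' T.verts) ∪ {x | ∃ i', x = inr (i', none) ∨ x = inr (i', some t)}
  Adj x y := liftRel G v₁ T k t x y ∨ liftRel G v₁ T k t y x
  adj_sub := by
    rintro x y (h | h) <;>
    · rcases h with ⟨p, q, rfl, rfl, h⟩ | ⟨i', rfl, rfl⟩ | ⟨i', rfl, rfl⟩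
      · first
          | exact fanExt_adj_inl_inl.mpr (T.adj_sub h)
          | exact (fanExt_adj_inl_inl.mpr (T.adj_sub h)).symm
      · first | exact fanExt_adj_v1_mid | exact fanExt_adj_v1_mid.symm
      · first | exact fanExt_adj_none_mid | exact fanExt_adj_none_mid.symm
  edge_vert := by
    rintro x y (h | h) <;>
      rcases h with ⟨p, q, h1, h2, h⟩ | ⟨i', h1, h2⟩ | ⟨i', h1, h2⟩ <;> subst h1 <;> subst h2
    · exact Or.inl ⟨p, T.edge_vert h, rfl⟩
    · exact Or.inl ⟨v₁, hv, rfl⟩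
    · exact Or.inr ⟨i', Or.inl rfl⟩
    · exact Or.inl ⟨q, T.edge_vert h.symm, rfl⟩
    · exact Or.inr ⟨i', Or.inr rfl⟩
    · exact Or.inr ⟨i', Or.inr rfl⟩
  symm := ⟨fun x y h => h.symm⟩

lemma lift_adj_inl_inl {T : G.Subgraph} {t : Fin ℓ} {hv : v₁ ∈ T.verts} {p q : V}
    (h : (lift G v₁ T k t hv).Adj (inl p) (inl q)) : T.Adj p q := by
  rcases h with h | h <;>
    rcases h with ⟨p', q', h1, h2, h⟩ | ⟨i', h1, h2⟩ | ⟨i', h1, h2⟩ <;> simp_all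
  exact h.symm

lemma lift_adj_none {T : G.Subgraph} {t : Fin ℓ} {hv : v₁ ∈ T.verts} {i' : Fin (k - 3)}
    {y : V ⊕ (Fin (k - 3) × Option (Fin ℓ))}
    (h : (lift G v₁ T k t hv).Adj (inr (i', none)) y) : y = inr (i', some t) := by
  rcases h with h | h <;>
    rcases h with ⟨p', q', h1, h2, h⟩ | ⟨i'', h1, h2⟩ | ⟨i'', h1, h2⟩ <;> simp_all

lemma lift_adj_mid {T : G.Subgraph} {t : Fin ℓ} {hv : v₁ ∈ T.verts} {i' : Fin (k - 3)}
    {j : Fin ℓ} {y : V ⊕ (Fin (k - 3) × Option (Fin ℓ))}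
    (h : (lift G v₁ T k t hv).Adj (inr (i', some j)) y) :
    y = inl v₁ ∨ y = inr (i', none) := by
  rcases h with h | h <;>
    rcases h with ⟨p', q', h1, h2, h⟩ | ⟨i'', h1, h2⟩ | ⟨i'', h1, h2⟩ <;> simp_all

lemma lift_isTree {T : G.Subgraph} {t : Fin ℓ} (hv : v₁ ∈ T.verts)
    (hT : T.coe.IsTree) : (lift G v₁ T k t hv).coe.IsTree := by
  -- the embedding of T.coe into the lift
  let F : T.coe →g (lift G v₁ T k t hv).coe :=
    ⟨fun x => ⟨inl x.1, Or.inl ⟨x.1, x.2, rfl⟩⟩,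
     fun {a b} h => Or.inl (Or.inl ⟨a.1, b.1, rfl, rfl, h⟩)⟩
  have hFinj : Function.Injective F := by
    rintro ⟨a, ha⟩ ⟨b, hb⟩ h
    have h2 : (inl (a : V) : V ⊕ (Fin (k - 3) × Option (Fin ℓ))) = inl (b : V) :=
      congrArg Subtype.val h
    exact Subtype.ext (inl_injective h2)
  have hroot : (inl v₁ : V ⊕ (Fin (k - 3) × Option (Fin ℓ))) ∈ (lift G v₁ T k t hv).verts :=
    Or.inl ⟨v₁, hv, rfl⟩
  have hreach : ∀ x : (lift G v₁ T k t hv).verts,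
      (lift G v₁ T k t hv).coe.Reachable x ⟨inl v₁, hroot⟩ := by
    rintro ⟨x, hx⟩
    rcases hx with ⟨p, hp, rfl⟩ | ⟨i', (rfl | rfl)⟩
    · have := (hT.isConnected.preconnected ⟨p, hp⟩ ⟨v₁, hv⟩).map F
      exact this
    · have h1 : (lift G v₁ T k t hv).coe.Adj
          ⟨inr (i', none), Or.inr ⟨i', Or.inl rfl⟩⟩
          ⟨inr (i', some t), Or.inr ⟨i', Or.inr rfl⟩⟩ :=
        Or.inl (Or.inr (Or.inr ⟨i', rfl, rfl⟩))
      have h2 : (lift G v₁ T k t hv).coe.Adj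
          ⟨inr (i', some t), Or.inr ⟨i', Or.inr rfl⟩⟩ ⟨inl v₁, hroot⟩ :=
        Or.inr (Or.inr (Or.inl ⟨i', rfl, rfl⟩))
      exact (h1.reachable).trans h2.reachable
    · have h2 : (lift G v₁ T k t hv).coe.Adj
          ⟨inr (i', some t), Or.inr ⟨i', Or.inr rfl⟩⟩ ⟨inl v₁, hroot⟩ :=
        Or.inr (Or.inr (Or.inl ⟨i', rfl, rfl⟩))
      exact h2.reachable
  constructor
  · haveI : Nonempty ((lift G v₁ T k t hv).verts) := ⟨⟨inl v₁, hroot⟩⟩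
    exact ⟨fun x y => (hreach x).trans (hreach y).symm⟩
  · intro v c hc
    refine acyclic_descend F hFinj ?_ hT.IsAcyclic c hc ?_
    · rintro ⟨a, ha⟩ ⟨b, hb⟩ h
      exact lift_adj_inl_inl (hv := hv) h
    · -- no vertex of the cycle is of the form inr _
      have hnone : ∀ w ∈ c.support, ∀ i' : Fin (k - 3),
          (w : V ⊕ (Fin (k - 3) × Option (Fin ℓ))) ≠ inr (i', none) := by
        rintro w hw i' hwv
        obtain ⟨x, y, hxy, hex, hey⟩ := cycle_two_nbrs c hc hw
        have hax : (lift G v₁ T k t hv).coe.Adj w x := c.adj_of_mem_edges hex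
        have hay : (lift G v₁ T k t hv).coe.Adj w y := c.adj_of_mem_edges hey
        have hx : (x : V ⊕ (Fin (k - 3) × Option (Fin ℓ))) = inr (i', some t) := by
          have := hax; rw [Subgraph.coe_adj, hwv] at this; exact lift_adj_none this
        have hy : (y : V ⊕ (Fin (k - 3) × Option (Fin ℓ))) = inr (i', some t) := by
          have := hay; rw [Subgraph.coe_adj, hwv] at this; exact lift_adj_none this
        exact hxy (Subtype.ext (hx.trans hy.symm))
      intro w hw
      rcases hxv : (w : V ⊕ (Fin (k - 3) × Option (Fin ℓ))) with p | z
      · have hp : p ∈ T.verts := by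
          have := w.2
          rw [hxv] at this
          rcases this with ⟨p', hp', h⟩ | ⟨i', (h | h)⟩ <;> simp_all
        exact ⟨⟨p, hp⟩, Subtype.ext hxv.symm⟩
      · exfalso
        obtain ⟨i', oj⟩ := z
        rcases oj with _ | j
        · exact hnone w hw i' hxv
        · obtain ⟨x, y, hxy, hex, hey⟩ := cycle_two_nbrs c hc hw
          have hax : (lift G v₁ T k t hv).coe.Adj w x := c.adj_of_mem_edges hex
          have hay : (lift G v₁ T k t hv).coe.Adj w y := c.adj_of_mem_edges hey
          have hx := lift_adj_mid (by rw [Subgraph.coe_adj, hxv] at hax; exact hax)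
          have hy := lift_adj_mid (by rw [Subgraph.coe_adj, hxv] at hay; exact hay)
          have hxs : x ∈ c.support := c.snd_mem_support_of_mem_edges hex
          have hys : y ∈ c.support := c.snd_mem_support_of_mem_edges hey
          rcases hx with hx | hx <;> rcases hy with hy | hy
          · exact hxy (Subtype.ext (hx.trans hy.symm))
          · exact hnone y hys i' hy
          · exact hnone x hxs i' hx
          · exact hnone x hxs i' hx

/-! ### The restriction subgraph (backward direction) -/

variable (G v₁ k ℓ) in
def restrict (T' : (fanExt G v₁ k ℓ).Subgraph) : G.Subgraph where
  verts := {p | inl p ∈ T'.verts}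
  Adj p q := T'.Adj (inl p) (inl q)
  adj_sub h := fanExt_adj_inl_inl.mp (T'.adj_sub h)
  edge_vert h := T'.edge_vert h
  symm := ⟨fun p q h => h.symm⟩

lemma restrict_reach {T' : (fanExt G v₁ k ℓ).Subgraph} (hv : inl v₁ ∈ T'.verts)
    {x y : T'.verts} (w : T'.coe.Walk x y) (q : V) (hq : inl q ∈ T'.verts)
    (hy : (y : V ⊕ (Fin (k - 3) × Option (Fin ℓ))) = inl q) :
    (∀ p (hp : inl p ∈ T'.verts), (x : V ⊕ (Fin (k - 3) × Option (Fin ℓ))) = inl p →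
        (restrict G v₁ k ℓ T').coe.Reachable ⟨p, hp⟩ ⟨q, hq⟩) ∧
      ((∃ z, (x : V ⊕ (Fin (k - 3) × Option (Fin ℓ))) = inr z) →
        (restrict G v₁ k ℓ T').coe.Reachable ⟨v₁, hv⟩ ⟨q, hq⟩) := by
  induction w with
  | nil =>
    constructor
    · intro p hp hx
      have : p = q := by rw [hx] at hy; exact inl_injective hy
      subst this
      rfl
    · rintro ⟨z, hz⟩
      rw [hz] at hy
      simp at hy
  | @cons x z y h w ih =>
    constructor
    · intro p hp hx
      rcases hzv : (z : V ⊕ (Fin (k - 3) × Option (Fin ℓ))) with r | zz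
      · have hr : inl r ∈ T'.verts := hzv ▸ z.2
        have hadj : (restrict G v₁ k ℓ T').coe.Adj ⟨p, hp⟩ ⟨r, hr⟩ := by
          show T'.Adj (inl p) (inl r)
          rw [← hx, ← hzv]
          exact h
        exact hadj.reachable.trans ((ih hy).1 r hr hzv)
      · have hadj : T'.Adj (inl p) (inr zz) := by
          rw [← hx, ← hzv]; exact h
        have : p = v₁ := fanExt_adj_inl_inr (T'.adj_sub hadj)
        subst this
        exact (ih hy).2 ⟨zz, hzv⟩
    · rintro ⟨xz, hx⟩
      rcases hzv : (z : V ⊕ (Fin (k - 3) × Option (Fin ℓ))) with r | zz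
      · have hr : inl r ∈ T'.verts := hzv ▸ z.2
        have hadj : T'.Adj (inr xz) (inl r) := by rw [← hx, ← hzv]; exact h
        have : r = v₁ := fanExt_adj_inl_inr (T'.adj_sub hadj).symm
        subst this
        exact (ih hy).1 _ hr hzv
      · exact (ih hy).2 ⟨zz, hzv⟩

lemma restrict_isTree {T' : (fanExt G v₁ k ℓ).Subgraph} (hv : inl v₁ ∈ T'.verts)
    (hT' : T'.coe.IsTree) : (restrict G v₁ k ℓ T').coe.IsTree := by
  constructor
  · haveI : Nonempty ((restrict G v₁ k ℓ T').verts) := ⟨⟨v₁, hv⟩⟩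
    refine ⟨fun x y => ?_⟩
    obtain ⟨p, hp⟩ := x
    obtain ⟨q, hq⟩ := y
    obtain ⟨w⟩ := hT'.isConnected.preconnected ⟨inl p, hp⟩ ⟨inl q, hq⟩
    exact (restrict_reach hv w q hq rfl).1 p hp rfl
  · intro v c hc
    let F : (restrict G v₁ k ℓ T').coe →g T'.coe :=
      ⟨fun x => ⟨inl x.1, x.2⟩, fun {a b} h => h⟩
    have hFinj : Function.Injective F := by
      rintro ⟨a, ha⟩ ⟨b, hb⟩ h
      have h2 : (inl (a : V) : V ⊕ (Fin (k - 3) × Option (Fin ℓ))) = inl (b : V) :=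
        congrArg Subtype.val h
      exact Subtype.ext (inl_injective h2)
    exact hT'.IsAcyclic (c.map F) (hc.map hFinj)

end Stmt5Aux

open Stmt5Aux Sum

/-- `G` contains `ℓ` pairwise edge-disjoint Steiner trees connecting `S = {v₁, v₂, v₃}`
iff `G'` contains `ℓ` pairwise edge-disjoint Steiner trees connecting
`S' = S ∪ {a¹, …, a^{k-3}}`. -/
theorem stmt5 {V : Type*} (G : SimpleGraph V) (v₁ v₂ v₃ : V)
    (h12 : v₁ ≠ v₂) (h13 : v₁ ≠ v₃) (h23 : v₂ ≠ v₃)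
    (k ℓ : ℕ) (hk : 4 ≤ k) (hl : 2 ≤ ℓ) :
    (∃ F : Fin ℓ → G.Subgraph, EdgeDisjointFamily G {v₁, v₂, v₃} F) ↔
    (∃ F : Fin ℓ → (fanExt G v₁ k ℓ).Subgraph,
        EdgeDisjointFamily (fanExt G v₁ k ℓ)
          ((Sum.inl '' {v₁, v₂, v₃}) ∪
            {x | ∃ i : Fin (k - 3), x = Sum.inr (i, none)}) F) := by
  constructor
  · rintro ⟨F, hS, hdis⟩
    have hv : ∀ t, v₁ ∈ (F t).verts := fun t => (hS t).1 (by simp)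
    refine ⟨fun t => lift G v₁ (F t) k t (hv t), fun t => ⟨?_, ?_⟩, ?_⟩
    · rintro x (⟨p, hp, rfl⟩ | ⟨i, rfl⟩)
      · exact Or.inl ⟨p, (hS t).1 hp, rfl⟩
      · exact Or.inr ⟨i, Or.inl rfl⟩
    · exact lift_isTree (hv t) (hS t).2
    · intro a b hab
      rw [Set.eq_empty_iff_forall_notMem]
      intro e he
      induction e with
      | h x y =>
        obtain ⟨h1, h2⟩ := he
        rw [Subgraph.mem_edgeSet] at h1 h2
        have key : ∀ (t : Fin ℓ) (T : G.Subgraph) (hvt : v₁ ∈ T.verts),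
            (lift G v₁ T k t hvt).Adj x y →
            (∃ p q, T.Adj p q ∧ s(x, y) = s(inl p, inl q)) ∨
            (∃ i', s(x, y) = s(inl v₁, (inr (i', some t) : V ⊕ (Fin (k - 3) × Option (Fin ℓ))))) ∨
            (∃ i', s(x, y) = s((inr (i', none) : V ⊕ (Fin (k - 3) × Option (Fin ℓ))),
              inr (i', some t))) := by
          rintro t T hvt (h | h) <;>
            rcases h with ⟨p, q, rfl, rfl, h⟩ | ⟨i', rfl, rfl⟩ | ⟨i', rfl, rfl⟩
          · exact Or.inl ⟨p, q, h, rfl⟩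
          · exact Or.inr (Or.inl ⟨i', rfl⟩)
          · exact Or.inr (Or.inr ⟨i', rfl⟩)
          · exact Or.inl ⟨p, q, h, Sym2.eq_swap⟩
          · exact Or.inr (Or.inl ⟨i', Sym2.eq_swap⟩)
          · exact Or.inr (Or.inr ⟨i', Sym2.eq_swap⟩)
        rcases key a (F a) (hv a) h1 with ⟨p, q, hpq, he1⟩ | ⟨i', he1⟩ | ⟨i', he1⟩ <;>
          rcases key b (F b) (hv b) h2 with ⟨p', q', hpq', he2⟩ | ⟨i'', he2⟩ | ⟨i'', he2⟩ <;>
          rw [he1] at he2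
        · have hmem : s(p, q) ∈ (F a).edgeSet ∩ (F b).edgeSet := by
            constructor
            · exact hpq
            · rw [Sym2.eq_iff] at he2
              rcases he2 with ⟨ha', hb'⟩ | ⟨ha', hb'⟩
              · rw [inl_injective ha', inl_injective hb']; exact hpq'
              · rw [inl_injective ha', inl_injective hb']; exact hpq'.symm
          rw [hdis a b hab] at hmem
          exact hmem
        all_goals simp [Sym2.eq_iff] at he2
        · exact hab he2.2
        · exact hab he2.2
  · rintro ⟨F, hS, hdis⟩
    have hv : ∀ t, inl v₁ ∈ (F t).verts := fun t => (hS t).1 (Or.inl ⟨v₁, by simp, rfl⟩)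
    refine ⟨fun t => restrict G v₁ k ℓ (F t), fun t => ⟨?_, ?_⟩, ?_⟩
    · rintro x hx
      exact (hS t).1 (Or.inl ⟨x, hx, rfl⟩)
    · exact restrict_isTree (hv t) (hS t).2
    · intro a b hab
      rw [Set.eq_empty_iff_forall_notMem]
      intro e he
      induction e with
      | h p q =>
        obtain ⟨h1, h2⟩ := he
        rw [Subgraph.mem_edgeSet] at h1 h2
        have hmem : s(inl p, (inl q : V ⊕ (Fin (k - 3) × Option (Fin ℓ)))) ∈
            (F a).edgeSet ∩ (F b).edgeSet := ⟨h1, h2⟩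
        rw [hdis a b hab] at hmem
        exact hmem
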